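/- arXiv:1206.4000 — 3 statements merged into one kernel-verified Lean document; each statement's English description precedes it below -/
import Mathlib

section
/- If U is uniformly distributed on [0,1] and A = -(a/n)·log(1 - U^a) for a > 0 and positive integer n, then the characteristic function of A is E[exp(i t A)] = Γ(1 + 1/a) Γ(1 - i t a/n) / Γ(1 - i t a/n + 1/a). -/
open MeasureTheory Complex
open scoped ProbabilityTheory

lemma aux_cpow_eq (a : ℝ) (ha : 0 < a) (c : ℂ) (u : ℝ) (hu : u ∈ Set.Ioo (0:ℝ) 1) :
    ((1 - u ^ a : ℝ) : ℂ) ^ c = Complex.exp (Complex.log ((1 - u ^ a : ℝ) : ℂ) * c) := by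
  have h2 : u ^ a < 1 := Real.rpow_lt_one hu.1.le hu.2 ha
  have h3 : (0:ℝ) < 1 - u ^ a := by linarith
  exact Complex.cpow_def_of_ne_zero (Complex.ofReal_ne_zero.mpr h3.ne') c

lemma aux_expform_meas (a : ℝ) (c : ℂ) :
    Measurable (fun u : ℝ => Complex.exp (Complex.log ((1 - u ^ a : ℝ) : ℂ) * c)) :=
  Complex.measurable_exp.comp <| Measurable.mul_const
    ((Complex.measurable_ofReal.comp (measurable_const.sub (measurable_id.pow_const a))).clog) c

lemma aux_expform_int (a : ℝ) (ha : 0 < a) (c : ℂ) (hcre : c.re = 0) :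
    IntegrableOn (fun u : ℝ => Complex.exp (Complex.log ((1 - u ^ a : ℝ) : ℂ) * c))
      (Set.Icc (0:ℝ) 1) := by
  refine Integrable.mono' (integrable_const 1)
    (aux_expform_meas a c).aestronglyMeasurable ?_
  rw [ae_restrict_iff' measurableSet_Icc]
  refine Filter.Eventually.of_forall fun u hu => ?_
  have h2 : u ^ a ≤ 1 := Real.rpow_le_one hu.1 hu.2 ha.le
  have h3 : (0:ℝ) ≤ 1 - u ^ a := by linarith
  rw [Complex.norm_exp]
  have him : (Complex.log ((1 - u ^ a : ℝ) : ℂ)).im = 0 := by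
    rw [Complex.log_im]
    exact Complex.arg_ofReal_of_nonneg h3
  have hre : (Complex.log ((1 - u ^ a : ℝ) : ℂ) * c).re = 0 := by
    rw [Complex.mul_re, him, hcre]
    ring
  rw [hre, Real.exp_zero]

/-- the substituted integrand -/
noncomputable def auxg (a : ℝ) (c : ℂ) : ℝ → ℂ :=
  fun x => (a:ℂ)⁻¹ * ((x:ℂ) ^ ((1:ℂ)/↑a - 1) * ((1 - x : ℝ) : ℂ) ^ c)

lemma aux_re_one_div (a : ℝ) (ha : 0 < a) : 0 < ((1:ℂ)/↑a).re := by
  have : (1:ℂ)/↑a = ((1/a : ℝ) : ℂ) := by push_cast; rfl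
  rw [this, Complex.ofReal_re]
  positivity

lemma auxg_intervalIntegrable (a : ℝ) (ha : 0 < a) (c : ℂ) (hcre : c.re = 0) :
    IntervalIntegrable (auxg a c) volume 0 1 := by
  have h1 : 0 < ((1:ℂ)/↑a).re := aux_re_one_div a ha
  have h2 : 0 < (c + 1).re := by simp [Complex.add_re, hcre]
  have hb := (Complex.betaIntegral_convergent h1 h2).const_mul (a:ℂ)⁻¹
  have : (fun x : ℝ => (a:ℂ)⁻¹ * ((x:ℂ) ^ ((1:ℂ)/↑a - 1) * (1 - (x:ℂ)) ^ (c + 1 - 1)))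
      = auxg a c := by
    funext x
    simp only [auxg, add_sub_cancel_right]
    push_cast
    ring_nf
  rwa [this] at hb

lemma auxg_contOn (a : ℝ) (ha : 0 < a) (c : ℂ) :
    ContinuousOn (auxg a c) (Set.Ioo (0:ℝ) 1) := by
  refine continuousOn_const.mul (ContinuousOn.mul ?_ ?_)
  · exact fun x hx => (continuousAt_ofReal_cpow_const x _ (Or.inr hx.1.ne')).continuousWithinAt
  · intro x hx
    have h1 : (1 - x : ℝ) ≠ 0 := by have := hx.2; intro h; linarith [sub_eq_zero.mp h]
    exact ((continuousAt_ofReal_cpow_const (1-x) c (Or.inr h1)).comp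
      ((continuous_const.sub continuous_id).continuousAt)).continuousWithinAt

lemma aux_hEq (a : ℝ) (ha : 0 < a) (c : ℂ) (u : ℝ) (hu : u ∈ Set.Ioo (0:ℝ) 1) :
    (a * u ^ (a-1)) • auxg a c (u ^ a) = ((1 - u ^ a : ℝ) : ℂ) ^ c := by
  have haC : (a : ℂ) ≠ 0 := Complex.ofReal_ne_zero.mpr ha.ne'
  have h1 : 0 < u ^ a := Real.rpow_pos_of_pos hu.1 a
  have hbase : ((u ^ a : ℝ) : ℂ) ^ ((1:ℂ)/↑a - 1) = ((u ^ (1 - a) : ℝ) : ℂ) := by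
    have e1 : ((1:ℂ)/↑a - 1) = ((1/a - 1 : ℝ) : ℂ) := by push_cast; ring
    rw [e1, ← Complex.ofReal_cpow h1.le]
    norm_cast
    rw [← Real.rpow_mul hu.1.le]
    congr 1
    field_simp
  have hu0 : (↑(u ^ (a-1)) : ℂ) * ↑(u ^ (1-a)) = 1 := by
    rw [← Complex.ofReal_mul, ← Real.rpow_add hu.1]
    norm_num
  rw [auxg, hbase, Complex.real_smul]
  push_cast
  calc (↑a * (↑(u ^ (a-1)) : ℂ)) * ((↑a)⁻¹ * ((↑(u ^ (1-a)) : ℂ) * (1 - (↑(u ^ a) : ℂ)) ^ c))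
      = ((↑a : ℂ) * (↑a)⁻¹) * (((↑(u ^ (a-1)) : ℂ) * ↑(u ^ (1-a))) * (1 - (↑(u ^ a) : ℂ)) ^ c) := by
        ring
    _ = (1 - (↑(u ^ a) : ℂ)) ^ c := by rw [mul_inv_cancel₀ haC, hu0, one_mul, one_mul]

lemma aux_ae_Ioo : ∀ᵐ (u : ℝ) ∂(volume.restrict (Set.Icc (0:ℝ) 1)), u ∈ Set.Ioo (0:ℝ) 1 := by
  have h0 : ∀ᵐ (u : ℝ), u ∉ ({0, 1} : Set ℝ) :=
    MeasureTheory.compl_mem_ae_iff.mpr (((Set.finite_singleton (1:ℝ)).insert 0).measure_zero _)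
  filter_upwards [ae_restrict_mem measurableSet_Icc, ae_restrict_of_ae h0] with u hu1 hu2
  simp only [Set.mem_insert_iff, Set.mem_singleton_iff, not_or] at hu2
  exact ⟨lt_of_le_of_ne hu1.1 (Ne.symm hu2.1), lt_of_le_of_ne hu1.2 hu2.2⟩

lemma aux_subst (a : ℝ) (ha : 0 < a) (c : ℂ) (hcre : c.re = 0) :
    ∫ u in (0:ℝ)..1, ((1 - u ^ a : ℝ) : ℂ) ^ c
      = (a:ℂ)⁻¹ * Complex.betaIntegral ((1:ℂ)/↑a) (c + 1) := by
  -- a.e. points of Ioc are in Ioo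
  have h1' : ∀ᵐ (u : ℝ), u ∉ ({1} : Set ℝ) :=
    MeasureTheory.compl_mem_ae_iff.mpr ((Set.finite_singleton 1).measure_zero _)
  -- replace integrand by the change-of-variables form
  have step1 : (∫ u in (0:ℝ)..1, ((1 - u ^ a : ℝ) : ℂ) ^ c)
      = ∫ u in (0:ℝ)..1, (a * u ^ (a-1)) • ((auxg a c) ∘ (fun u : ℝ => u ^ a)) u := by
    refine intervalIntegral.integral_congr_ae ?_
    filter_upwards [h1'] with u hu1 hu2
    rw [Set.uIoc_of_le zero_le_one] at hu2
    have hu' : u ∈ Set.Ioo (0:ℝ) 1 :=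
      ⟨hu2.1, lt_of_le_of_ne hu2.2 (by simpa using hu1)⟩
    exact (aux_hEq a ha c u hu').symm
  rw [step1]
  have himg1 : (fun u : ℝ => u ^ a) '' (Set.uIcc (0:ℝ) 1) ⊆ Set.Icc (0:ℝ) 1 := by
    rw [Set.uIcc_of_le zero_le_one]
    rintro x ⟨u, hu, rfl⟩
    exact ⟨Real.rpow_nonneg hu.1 a, Real.rpow_le_one hu.1 hu.2 ha.le⟩
  have himg2 : (fun u : ℝ => u ^ a) '' (Set.Ioo (min (0:ℝ) 1) (max 0 1)) ⊆ Set.Ioo (0:ℝ) 1 := by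
    rw [min_eq_left zero_le_one, max_eq_right zero_le_one]
    rintro x ⟨u, hu, rfl⟩
    exact ⟨Real.rpow_pos_of_pos hu.1 a, Real.rpow_lt_one hu.1.le hu.2 ha⟩
  have hg1 : IntegrableOn (auxg a c) ((fun u : ℝ => u ^ a) '' Set.uIcc (0:ℝ) 1) := by
    have h := auxg_intervalIntegrable a ha c hcre
    rw [intervalIntegrable_iff'] at h
    exact h.mono_set (himg1.trans (by rw [Set.uIcc_of_le zero_le_one]))
  have hg2 : IntegrableOn
      (fun u : ℝ => (a * u ^ (a-1)) • ((auxg a c) ∘ (fun u : ℝ => u ^ a)) u)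
      (Set.uIcc (0:ℝ) 1) := by
    rw [Set.uIcc_of_le zero_le_one]
    refine (aux_expform_int a ha c hcre).congr ?_
    filter_upwards [aux_ae_Ioo] with u hu
    rw [Function.comp_apply, aux_hEq a ha c u hu, aux_cpow_eq a ha c u hu]
  have hsub := intervalIntegral.integral_comp_smul_deriv'''
    (a := (0:ℝ)) (b := 1) (f := fun u : ℝ => u ^ a) (f' := fun u => a * u ^ (a-1))
    (g := auxg a c)
    (fun x _ => (Real.continuousAt_rpow_const x a (Or.inr ha.le)).continuousWithinAt)
    (fun x hx => by
      rw [min_eq_left zero_le_one] at hx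
      exact (Real.hasDerivAt_rpow_const (Or.inl hx.1.ne')).hasDerivWithinAt)
    ((auxg_contOn a ha c).mono himg2)
    hg1 hg2
  rw [hsub]
  simp only [Real.zero_rpow ha.ne', Real.one_rpow]
  rw [show auxg a c = fun x : ℝ => (a:ℂ)⁻¹ * ((x:ℂ) ^ ((1:ℂ)/↑a - 1) * ((1 - x : ℝ) : ℂ) ^ c) from rfl]
  rw [intervalIntegral.integral_const_mul]
  congr 1
  rw [Complex.betaIntegral]
  refine intervalIntegral.integral_congr fun x _ => ?_
  push_cast [add_sub_cancel_right]
  ring_nf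

lemma aux_beta_gamma (a : ℝ) (ha : 0 < a) (c : ℂ) (hcre : c.re = 0) :
    (a:ℂ)⁻¹ * Complex.betaIntegral ((1:ℂ)/↑a) (c + 1)
      = Complex.Gamma (1 + 1/↑a) * Complex.Gamma (c + 1) / Complex.Gamma ((c + 1) + 1/↑a) := by
  have haC : (a : ℂ) ≠ 0 := Complex.ofReal_ne_zero.mpr ha.ne'
  have h1 : 0 < ((1:ℂ)/↑a).re := aux_re_one_div a ha
  have h2 : 0 < (c + 1).re := by simp [Complex.add_re, hcre]
  have hb := Complex.Gamma_mul_Gamma_eq_betaIntegral h1 h2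
  have hGne : Complex.Gamma ((1:ℂ)/↑a + (c + 1)) ≠ 0 :=
    Complex.Gamma_ne_zero_of_re_pos (by rw [Complex.add_re]; linarith)
  have e1 : (1:ℂ) + 1/↑a = (1:ℂ)/↑a + 1 := by ring
  have e2 : (c + 1) + 1/↑a = (1:ℂ)/↑a + (c + 1) := by ring
  rw [e1, e2, Complex.Gamma_add_one _ (one_div_ne_zero haC), eq_div_iff hGne]
  linear_combination (-(a:ℂ)⁻¹) * hb

lemma aux_F_eq (a t : ℝ) (n : ℕ) (ha : 0 < a) (u : ℝ) (hu : u ∈ Set.Ioo (0:ℝ) 1) :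
    Complex.exp (Complex.I * t * (↑(-(a / (n:ℝ)) * Real.log (1 - u ^ a)) : ℂ))
      = ((1 - u ^ a : ℝ) : ℂ) ^ (-(Complex.I * ↑t * ↑a / ↑n)) := by
  have h1 : 0 < u ^ a := Real.rpow_pos_of_pos hu.1 a
  have h2 : u ^ a < 1 := Real.rpow_lt_one hu.1.le hu.2 ha
  have h3 : (0:ℝ) < 1 - u ^ a := by linarith
  rw [Complex.cpow_def_of_ne_zero (Complex.ofReal_ne_zero.mpr h3.ne'),
    ← Complex.ofReal_log h3.le]
  congr 1
  push_cast
  ring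

/-- If `U` is uniform on `[0,1]` and `A = -(a/n)·log(1 - U^a)` with `a > 0`, `n` a positive
integer, then `E[exp(itA)] = Γ(1+1/a) Γ(1 - ita/n) / Γ(1 - ita/n + 1/a)`. -/
theorem charFun_of_neg_log (Ω : Type*) [MeasureSpace Ω] [IsProbabilityMeasure (ℙ : Measure Ω)]
    (U : Ω → ℝ) (hU : Measure.map U ℙ = volume.restrict (Set.Icc (0:ℝ) 1))
    (a : ℝ) (ha : 0 < a) (n : ℕ) (hn : 0 < n)
    (A : Ω → ℝ) (hA : ∀ ω : Ω, A ω = -(a / n) * Real.log (1 - U ω ^ a)) (t : ℝ) :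
    ∫ ω : Ω, Complex.exp (Complex.I * t * A ω) ∂(ℙ : Measure Ω) =
      Complex.Gamma (1 + 1 / a) * Complex.Gamma (1 - Complex.I * t * a / n) /
        Complex.Gamma (1 - Complex.I * t * a / n + 1 / a) := by
  have hne : NeZero (Measure.map U ℙ) := by
    rw [hU]
    refine ⟨fun h0 => ?_⟩
    have h1 : (volume.restrict (Set.Icc (0:ℝ) 1)) Set.univ = 0 := by rw [h0]; simp
    rw [Measure.restrict_apply_univ, Real.volume_Icc] at h1
    norm_num at h1
  have hUm : AEMeasurable U ℙ := aemeasurable_of_map_neZero hne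
  have hcre : (-(Complex.I * ↑t * ↑a / ↑n)).re = 0 := by
    have h : -(Complex.I * ↑t * ↑a / ↑n) = ((-(t * a / n) : ℝ) : ℂ) * Complex.I := by
      push_cast; ring
    rw [h]; simp
  have hFm : Measurable (fun u : ℝ =>
      Complex.exp (Complex.I * t * (↑(-(a / (n:ℝ)) * Real.log (1 - u ^ a)) : ℂ))) :=
    Complex.measurable_exp.comp <| measurable_const.mul <| Complex.measurable_ofReal.comp <|
      measurable_const.mul <| Real.measurable_log.comp
        (measurable_const.sub (measurable_id.pow_const a))
  have step1 : (∫ ω : Ω, Complex.exp (Complex.I * t * A ω) ∂(ℙ : Measure Ω))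
      = ∫ u in Set.Icc (0:ℝ) 1,
          Complex.exp (Complex.I * t * (↑(-(a / (n:ℝ)) * Real.log (1 - u ^ a)) : ℂ)) := by
    rw [← hU, integral_map hUm hFm.aestronglyMeasurable]
    simp only [hA]
  have step2 : (∫ u in Set.Icc (0:ℝ) 1,
          Complex.exp (Complex.I * t * (↑(-(a / (n:ℝ)) * Real.log (1 - u ^ a)) : ℂ)))
      = ∫ u in Set.Icc (0:ℝ) 1, ((1 - u ^ a : ℝ) : ℂ) ^ (-(Complex.I * ↑t * ↑a / ↑n)) := by
    refine integral_congr_ae ?_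
    filter_upwards [aux_ae_Ioo] with u hu using aux_F_eq a t n ha u hu
  have step3 : (∫ u in Set.Icc (0:ℝ) 1, ((1 - u ^ a : ℝ) : ℂ) ^ (-(Complex.I * ↑t * ↑a / ↑n)))
      = ∫ u in (0:ℝ)..1, ((1 - u ^ a : ℝ) : ℂ) ^ (-(Complex.I * ↑t * ↑a / ↑n)) := by
    rw [MeasureTheory.integral_Icc_eq_integral_Ioc, intervalIntegral.integral_of_le zero_le_one]
  rw [step1, step2, step3, aux_subst a ha _ hcre, aux_beta_gamma a ha _ hcre]
  rw [show (1:ℂ) - Complex.I * ↑t * ↑a / ↑n = -(Complex.I * ↑t * ↑a / ↑n) + 1 from by ring]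
end

section
/- Let X₁,...,Xₙ be i.i.d. random variables with continuous CDF F, and define A = -(a/n)·Σᵢ log(1 - F(Xᵢ)^a) for a > 0. Then A ≥ 0 almost surely and its characteristic function equals (Γ(1+1/a) Γ(1 - i t a/n) / Γ(1 - i t a/n + 1/a))^n. -/
open MeasureTheory Complex
open scoped ProbabilityTheory

section Helpers

open Set

lemma cdf_preimage_Iic (μ : Measure ℝ) [IsProbabilityMeasure μ]
    (F : ℝ → ℝ) (hF : F = fun x => ProbabilityTheory.cdf μ x) (hFcont : Continuous F)
    (u : ℝ) : μ {x | F x ≤ u} = ENNReal.ofReal (min u 1) := by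
  have hF01 : ∀ x, 0 ≤ F x ∧ F x ≤ 1 := by
    intro x; subst hF; exact ⟨ProbabilityTheory.cdf_nonneg μ x, ProbabilityTheory.cdf_le_one μ x⟩
  have hmono : Monotone F := by subst hF; exact ProbabilityTheory.monotone_cdf μ
  have htop : Filter.Tendsto F Filter.atTop (nhds 1) := by
    subst hF; exact ProbabilityTheory.tendsto_cdf_atTop μ
  have hbot : Filter.Tendsto F Filter.atBot (nhds 0) := by
    subst hF; exact ProbabilityTheory.tendsto_cdf_atBot μ
  have hIic : ∀ b, μ (Iic b) = ENNReal.ofReal (F b) := by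
    intro b; subst hF; exact (ProbabilityTheory.ofReal_cdf μ b).symm
  rcases le_or_gt 1 u with h1 | h1
  · have : {x | F x ≤ u} = univ := eq_univ_of_forall fun x => (hF01 x).2.trans h1
    rw [this, measure_univ, min_eq_right h1, ENNReal.ofReal_one]
  · rw [min_eq_left h1.le]
    set S := {x | F x ≤ u} with hS
    rcases eq_empty_or_nonempty S with hSe | hSne
    · have hu0 : u ≤ 0 := by
        by_contra hu
        push_neg at hu
        have : ∀ᶠ x in Filter.atBot, F x < u :=
          hbot.eventually_lt_const hu
        obtain ⟨x, hx⟩ := this.exists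
        have hxS : x ∈ S := le_of_lt hx
        rw [hSe] at hxS
        exact hxS
      rw [hSe]
      simp [ENNReal.ofReal_eq_zero.mpr hu0]
    · have hclosed : IsClosed S := isClosed_Iic.preimage hFcont
      have hbdd : BddAbove S := by
        have : ∀ᶠ x in Filter.atTop, u < F x := htop.eventually_const_lt h1
        obtain ⟨M, hM⟩ := Filter.eventually_atTop.1 this
        refine ⟨M, fun x hx => ?_⟩
        by_contra hxM
        push_neg at hxM
        exact absurd hx (not_le.mpr (hM x hxM.le))
      set b := sSup S with hb
      have hbS : b ∈ S := hclosed.csSup_mem hSne hbdd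
      have hSIic : S = Iic b := by
        apply Subset.antisymm (fun x hx => le_csSup hbdd hx)
        intro x hx
        exact le_trans (hmono hx) hbS
      have hub : u ≤ F b := by
        have hten : Filter.Tendsto F (nhdsWithin b (Ioi b)) (nhds (F b)) :=
          (hFcont.continuousAt).continuousWithinAt.tendsto
        refine ge_of_tendsto hten ?_
        filter_upwards [self_mem_nhdsWithin] with y hy
        by_contra hyu
        push_neg at hyu
        exact absurd (le_csSup hbdd hyu.le) (not_le.mpr hy)
      have hFb : F b = u := le_antisymm hbS hub
      rw [hSIic, hIic, hFb]

lemma map_cdf_uniform (μ : Measure ℝ) [IsProbabilityMeasure μ]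
    (F : ℝ → ℝ) (hF : F = fun x => ProbabilityTheory.cdf μ x) (hFcont : Continuous F) :
    μ.map F = volume.restrict (Icc (0:ℝ) 1) := by
  have hFmeas : Measurable F := hFcont.measurable
  refine Measure.ext_of_Iic _ _ (fun u => ?_)
  rw [Measure.map_apply hFmeas measurableSet_Iic,
    Measure.restrict_apply measurableSet_Iic]
  have h1 : Iic u ∩ Icc (0:ℝ) 1 = Icc 0 (min u 1) := by
    ext x; simp only [mem_inter_iff, mem_Iic, mem_Icc, le_min_iff]; tauto
  rw [h1, Real.volume_Icc, sub_zero]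
  exact cdf_preimage_Iic μ F hF hFcont u

lemma indepFun_integral_mul_complex {Ω : Type*} [MeasureSpace Ω]
    [IsProbabilityMeasure (ℙ : Measure Ω)] {G H : Ω → ℂ}
    (h : ProbabilityTheory.IndepFun G H ℙ) (hG : Measurable G) (hH : Measurable H) :
    ∫ ω, G ω * H ω ∂(ℙ : Measure Ω) = (∫ ω, G ω ∂(ℙ : Measure Ω)) * ∫ ω, H ω ∂(ℙ : Measure Ω) := by
  have hmap := (ProbabilityTheory.indepFun_iff_map_prod_eq_prod_map_map
    hG.aemeasurable hH.aemeasurable).1 h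
  haveI : IsProbabilityMeasure ((ℙ : Measure Ω).map G) :=
    Measure.isProbabilityMeasure_map hG.aemeasurable
  haveI : IsProbabilityMeasure ((ℙ : Measure Ω).map H) :=
    Measure.isProbabilityMeasure_map hH.aemeasurable
  have h1 : ∫ ω, G ω * H ω ∂(ℙ : Measure Ω)
      = ∫ z : ℂ × ℂ, z.1 * z.2 ∂((ℙ : Measure Ω).map (fun ω => (G ω, H ω))) := by
    rw [integral_map (hG.prodMk hH).aemeasurable
      (Continuous.aestronglyMeasurable (by continuity))]
  rw [h1, hmap, integral_prod_mul (f := fun z : ℂ => z) (g := fun z : ℂ => z),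
    integral_map (φ := G) hG.aemeasurable (f := fun z : ℂ => z) aestronglyMeasurable_id,
    integral_map (φ := H) hH.aemeasurable (f := fun z : ℂ => z) aestronglyMeasurable_id]

lemma iIndep_integral_prod_complex {Ω : Type*} [MeasureSpace Ω]
    [IsProbabilityMeasure (ℙ : Measure Ω)] {ι : Type*} [Fintype ι] (G : ι → Ω → ℂ)
    (hindep : ProbabilityTheory.iIndepFun G ℙ)
    (hmeas : ∀ i, Measurable (G i)) (s : Finset ι) :
    ∫ ω, ∏ i ∈ s, G i ω ∂(ℙ : Measure Ω) = ∏ i ∈ s, ∫ ω, G i ω ∂(ℙ : Measure Ω) := by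
  classical
  induction s using Finset.induction_on with
  | empty => simp
  | insert j s' hj ih =>
    have hind : ProbabilityTheory.IndepFun (∏ i ∈ s', G i) (G j) ℙ :=
      ProbabilityTheory.iIndepFun.indepFun_finset_prod_of_notMem hindep hmeas hj
    simp_rw [Finset.prod_insert hj]
    have : ∫ ω, G j ω * ∏ i ∈ s', G i ω ∂(ℙ : Measure Ω)
        = (∫ ω, G j ω ∂(ℙ : Measure Ω)) * ∫ ω, ∏ i ∈ s', G i ω ∂(ℙ : Measure Ω) := by
      rw [mul_comm (∫ ω, G j ω ∂(ℙ : Measure Ω))]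
      have : ∀ ω, G j ω * ∏ i ∈ s', G i ω = (∏ i ∈ s', G i ω) * G j ω := fun ω => mul_comm _ _
      simp_rw [this]
      have hind' : ProbabilityTheory.IndepFun (fun ω => ∏ i ∈ s', G i ω) (G j) ℙ := by
        have : (fun ω => ∏ i ∈ s', G i ω) = ∏ i ∈ s', G i := by
          funext ω; simp
        rw [this]; exact hind
      exact indepFun_integral_mul_complex hind'
        (Finset.measurable_prod s' (fun i _ => hmeas i)) (hmeas j)
    rw [this, ih]

lemma g_meas (c : ℂ) (a : ℝ) : Measurable (fun u : ℝ => (((1 - u ^ a : ℝ) : ℂ)) ^ c) := by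
  have hb : Measurable fun u : ℝ => ((1 - u ^ a : ℝ) : ℂ) :=
    Complex.measurable_ofReal.comp ((measurable_const.sub (measurable_id.pow_const a)))
  exact hb.pow_const c

lemma g_norm_le (c : ℂ) (hc : c.re = 0) (r : ℝ) (hr : 0 ≤ r) : ‖((r : ℂ)) ^ c‖ ≤ 1 := by
  rcases eq_or_lt_of_le hr with h0 | h0
  · rcases eq_or_ne c 0 with hc0 | hc0
    · simp [hc0]
    · rw [← h0]
      simp [Complex.zero_cpow hc0]
  · rw [Complex.norm_cpow_eq_rpow_re_of_pos h0, hc, Real.rpow_zero]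

lemma beta_calc {a : ℝ} (ha : 0 < a) {c : ℂ} (hc : c.re = 0) :
    ∫ u in Icc (0:ℝ) 1, Complex.exp (c * Real.log (1 - u ^ a))
      = Complex.Gamma (1 + 1 / (a:ℂ)) * Complex.Gamma (1 + c) /
          Complex.Gamma (1 + c + 1 / (a:ℂ)) := by
  have ha0 : (a:ℂ) ≠ 0 := Complex.ofReal_ne_zero.mpr ha.ne'
  set g : ℝ → ℂ := fun u => (((1 - u ^ a : ℝ) : ℂ)) ^ c with hg
  have step1 : ∫ u in Icc (0:ℝ) 1, Complex.exp (c * Real.log (1 - u ^ a))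
      = ∫ u in (0:ℝ)..1, g u := by
    rw [integral_Icc_eq_integral_Ioc, intervalIntegral.integral_of_le zero_le_one,
      integral_Ioc_eq_integral_Ioo, integral_Ioc_eq_integral_Ioo]
    refine setIntegral_congr_fun measurableSet_Ioo (fun u hu => ?_)
    have h1 : u ^ a < 1 := Real.rpow_lt_one hu.1.le hu.2 ha
    have h2 : (0:ℝ) < 1 - u ^ a := by linarith
    have hb0 : ((1 - u ^ a : ℝ) : ℂ) ≠ 0 := Complex.ofReal_ne_zero.mpr h2.ne'
    show Complex.exp (c * Real.log (1 - u ^ a)) = ((1 - u ^ a : ℝ) : ℂ) ^ c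
    rw [Complex.cpow_def_of_ne_zero hb0, ← Complex.ofReal_log h2.le, mul_comm]
  set f : ℝ → ℝ := fun x => x ^ (1/a) with hf
  set f' : ℝ → ℝ := fun x => (1/a) * x ^ (1/a - 1) with hf'
  have hinv : 0 < 1/a := by positivity
  have hfc : Continuous f := by
    rw [hf]
    rw [continuous_iff_continuousAt]
    exact fun x => Real.continuousAt_rpow_const x (1/a) (Or.inr hinv.le)
  have hmaps : ∀ x ∈ Icc (0:ℝ) 1, f x ∈ Icc (0:ℝ) 1 := by
    intro x hx
    exact ⟨Real.rpow_nonneg hx.1 _, Real.rpow_le_one hx.1 hx.2 hinv.le⟩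
  have hIoo : ∀ x ∈ Ioo (0:ℝ) 1, f x ∈ Ioo (0:ℝ) 1 := by
    intro x hx
    exact ⟨Real.rpow_pos_of_pos hx.1 _, Real.rpow_lt_one hx.1.le hx.2 hinv⟩
  have hgInt : IntegrableOn g (Icc (0:ℝ) 1) := by
    refine Integrable.mono' (integrable_const 1) ((g_meas c a).aestronglyMeasurable) ?_
    refine (ae_restrict_iff' measurableSet_Icc).2 (Filter.Eventually.of_forall fun u hu => ?_)
    exact g_norm_le c hc _ (by nlinarith [Real.rpow_le_one hu.1 hu.2 ha.le])
  have hsub : (∫ x in (0:ℝ)..1, f' x • (g ∘ f) x) = ∫ u in (f 0)..(f 1), g u := by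
    apply intervalIntegral.integral_comp_smul_deriv''' (f := f) (f' := f') (g := g)
    · exact hfc.continuousOn
    · intro x hx
      simp only [min_self, min_eq_left zero_le_one, max_eq_right zero_le_one] at hx
      exact ((Real.hasDerivAt_rpow_const (p := 1/a) (Or.inl hx.1.ne')).hasDerivWithinAt)
    · refine ContinuousOn.mono (s := Ioo (0:ℝ) 1) ?_ ?_
      · intro u hu
        have h2 : (0:ℝ) < 1 - u ^ a := by
          have := Real.rpow_lt_one hu.1.le hu.2 ha; linarith
        refine ContinuousAt.continuousWithinAt ?_
        refine ContinuousAt.comp (g := fun z : ℂ => z ^ c) ?_ ?_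
        · exact continuousAt_cpow_const (by
            rw [Complex.mem_slitPlane_iff]; left; simpa using h2)
        · exact Complex.continuous_ofReal.continuousAt.comp
            ((continuous_const.sub (Real.continuous_rpow_const ha.le)).continuousAt)
      · intro u hu
        simp only [min_self, min_eq_left zero_le_one,
          max_eq_right zero_le_one] at hu
        obtain ⟨x, hx, rfl⟩ := hu
        exact hIoo x hx
    · refine hgInt.mono_set ?_
      intro u hu
      obtain ⟨x, hx, rfl⟩ := hu
      rw [uIcc_of_le zero_le_one] at hx
      exact hmaps x hx
    · rw [uIcc_of_le zero_le_one]
      have hrint : IntervalIntegrable (fun x : ℝ => x ^ (1/a - 1)) volume 0 1 :=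
        intervalIntegral.intervalIntegrable_rpow' (by linarith)
      have hbint : IntervalIntegrable (fun x : ℝ => (1/a) * x ^ (1/a - 1)) volume 0 1 :=
        hrint.const_mul _
      rw [intervalIntegrable_iff', uIcc_of_le zero_le_one] at hbint
      refine Integrable.mono' hbint ?_ ?_
      · exact (((measurable_const.mul (measurable_id.pow_const _))).aestronglyMeasurable.smul
          ((g_meas c a).comp hfc.measurable).aestronglyMeasurable)
      · refine (ae_restrict_iff' measurableSet_Icc).2 (Filter.Eventually.of_forall fun x hx => ?_)
        have hx1 : (0:ℝ) ≤ x ^ (1/a - 1) := Real.rpow_nonneg hx.1 _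
        have hb : ‖g (f x)‖ ≤ 1 := by
          have := hmaps x hx
          exact g_norm_le c hc _ (by nlinarith [Real.rpow_le_one (this.1) (this.2) ha.le])
        rw [norm_smul]
        calc ‖f' x‖ * ‖g (f x)‖ ≤ ‖f' x‖ * 1 := by
              exact mul_le_mul_of_nonneg_left hb (norm_nonneg _)
          _ = (1/a) * x ^ (1/a - 1) := by
              rw [mul_one, hf', Real.norm_eq_abs, _root_.abs_of_nonneg (by positivity)]
  have hf0 : f 0 = 0 := Real.zero_rpow hinv.ne'
  have hf1 : f 1 = 1 := Real.one_rpow _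
  have step3 : (∫ x in (0:ℝ)..1, f' x • (g ∘ f) x)
      = ((a:ℂ))⁻¹ * Complex.betaIntegral (1/(a:ℂ)) (c+1) := by
    have hbeta : ((a:ℂ))⁻¹ * Complex.betaIntegral (1/(a:ℂ)) (c+1)
        = ∫ x in (0:ℝ)..1, ((a:ℂ))⁻¹ *
            ((x:ℂ) ^ (1/(a:ℂ) - 1) * (1 - (x:ℂ)) ^ (c + 1 - 1)) := by
      rw [Complex.betaIntegral, ← intervalIntegral.integral_const_mul]
    rw [hbeta, intervalIntegral.integral_of_le zero_le_one,
      intervalIntegral.integral_of_le zero_le_one,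
      integral_Ioc_eq_integral_Ioo, integral_Ioc_eq_integral_Ioo]
    refine setIntegral_congr_fun measurableSet_Ioo (fun x hx => ?_)
    have hxpow : (x ^ (1/a)) ^ a = x := by
      rw [← Real.rpow_mul hx.1.le, one_div, inv_mul_cancel₀ ha.ne', Real.rpow_one]
    have hgf : (g ∘ f) x = ((1 - x : ℝ) : ℂ) ^ c := by
      show (((1 - (x ^ (1/a)) ^ a : ℝ) : ℂ)) ^ c = _
      rw [hxpow]
    show f' x • (g ∘ f) x = _
    rw [hgf]
    have hsmul : f' x • ((1 - x : ℝ) : ℂ) ^ c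
        = ((1/a * x ^ (1/a - 1) : ℝ) : ℂ) * ((1 - x : ℝ) : ℂ) ^ c := by
      rw [← Complex.real_smul]
    rw [hsmul, Complex.ofReal_mul, Complex.ofReal_cpow hx.1.le]
    have hexp : ((1/a - 1 : ℝ) : ℂ) = 1/(a:ℂ) - 1 := by push_cast; ring
    have h1x : ((1 - x : ℝ) : ℂ) = 1 - (x:ℂ) := by push_cast; ring
    rw [hexp, h1x, add_sub_cancel_right]
    push_cast
    ring
  have hre1 : (1/(a:ℂ)).re = 1/a := by
    rw [show (1/(a:ℂ)) = ((1/a : ℝ) : ℂ) by push_cast; ring, Complex.ofReal_re]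
  have hres : 0 < (1/(a:ℂ)).re := by rw [hre1]; positivity
  have hret : 0 < (c + 1).re := by simp [hc]
  have hGne : Complex.Gamma (1/(a:ℂ) + (c + 1)) ≠ 0 := by
    refine Complex.Gamma_ne_zero_of_re_pos ?_
    rw [Complex.add_re, hre1]
    simp only [Complex.add_re, Complex.one_re, hc]
    positivity
  have hbetaval : Complex.betaIntegral (1/(a:ℂ)) (c+1)
      = Complex.Gamma (1/(a:ℂ)) * Complex.Gamma (c+1) / Complex.Gamma (1/(a:ℂ) + (c+1)) := by
    have hGG := Complex.Gamma_mul_Gamma_eq_betaIntegral hres hret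
    rw [eq_div_iff hGne, mul_comm]
    exact hGG.symm
  have hinvne : 1/(a:ℂ) ≠ 0 := one_div_ne_zero ha0
  have hGadd : Complex.Gamma (1 + 1/(a:ℂ)) = (1/(a:ℂ)) * Complex.Gamma (1/(a:ℂ)) := by
    rw [show (1:ℂ) + 1/(a:ℂ) = 1/(a:ℂ) + 1 by ring, Complex.Gamma_add_one _ hinvne]
  have h2 : ∫ u in (0:ℝ)..1, g u = ∫ x in (0:ℝ)..1, f' x • (g ∘ f) x := by
    rw [hsub, hf0, hf1]
  rw [step1, h2, step3, hbetaval, hGadd,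
    show (1:ℂ) + c = c + 1 by ring,
    show c + 1 + 1/(a:ℂ) = 1/(a:ℂ) + (c+1) by ring]
  field_simp

end Helpers

/-- If `X₁,…,Xₙ` are i.i.d. with common continuous CDF `F` and
`A = -(a/n)·Σᵢ log(1 - F(Xᵢ)^a)` for `a > 0`, then `A ≥ 0` a.s. and its characteristic
function equals `(Γ(1+1/a) Γ(1 - ita/n) / Γ(1 - ita/n + 1/a))^n`. -/
theorem charFun_test_statistic (Ω : Type*) [MeasureSpace Ω]
    [IsProbabilityMeasure (ℙ : Measure Ω)]
    (n : ℕ) (hn : 0 < n) (X : Fin n → Ω → ℝ)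
    (hmeas : ∀ i, Measurable (X i))
    (hindep : ProbabilityTheory.iIndepFun X ℙ)
    (μ : Measure ℝ) (hid : ∀ i, Measure.map (X i) ℙ = μ)
    (F : ℝ → ℝ) (hF : F = fun x => ProbabilityTheory.cdf μ x) (hFcont : Continuous F)
    (a : ℝ) (ha : 0 < a)
    (A : Ω → ℝ)
    (hA : ∀ ω : Ω, A ω = -(a / n) * ∑ i, Real.log (1 - F (X i ω) ^ a)) (t : ℝ) :
    (∀ᵐ ω : Ω ∂ℙ, 0 ≤ A ω) ∧
      ∫ ω : Ω, Complex.exp (Complex.I * t * A ω) ∂(ℙ : Measure Ω) =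
        (Complex.Gamma (1 + 1 / a) * Complex.Gamma (1 - Complex.I * t * a / n) /
          Complex.Gamma (1 - Complex.I * t * a / n + 1 / a)) ^ n := by
  have hF01 : ∀ x, 0 ≤ F x ∧ F x ≤ 1 := by
    intro x
    rw [hF]
    exact ⟨ProbabilityTheory.cdf_nonneg μ x, ProbabilityTheory.cdf_le_one μ x⟩
  constructor
  · refine Filter.Eventually.of_forall (fun ω => ?_)
    rw [hA ω]
    have hsum : ∑ i, Real.log (1 - F (X i ω) ^ a) ≤ 0 := by
      refine Finset.sum_nonpos (fun i _ => ?_)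
      have h0 := (hF01 (X i ω)).1
      have h1 := (hF01 (X i ω)).2
      have hp0 : 0 ≤ F (X i ω) ^ a := Real.rpow_nonneg h0 a
      have hp1 : F (X i ω) ^ a ≤ 1 := Real.rpow_le_one h0 h1 ha.le
      exact Real.log_nonpos (by linarith) (by linarith)
    have hco : -(a / (n:ℝ)) ≤ 0 := neg_nonpos.mpr (by positivity)
    nlinarith
  · haveI : IsProbabilityMeasure μ := by
      rw [← hid ⟨0, hn⟩]
      exact Measure.isProbabilityMeasure_map (hmeas _).aemeasurable
    set c : ℂ := -(Complex.I * (t:ℂ) * (a:ℂ) / (n:ℂ)) with hcdef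
    have hcre : c.re = 0 := by
      have hc' : c = ((-(t * a / n) : ℝ) : ℂ) * Complex.I := by
        rw [hcdef]; push_cast; ring
      rw [hc', Complex.re_ofReal_mul, Complex.I_re, mul_zero]
    set ψ : ℝ → ℂ := fun u => Complex.exp (c * Real.log (1 - u ^ a)) with hψdef
    have hψ : Measurable ψ := by
      refine Complex.measurable_exp.comp ?_
      refine measurable_const.mul ?_
      exact Complex.measurable_ofReal.comp
        (Real.measurable_log.comp (measurable_const.sub (measurable_id.pow_const a)))
    set φ : ℝ → ℂ := fun x => ψ (F x) with hφdef
    have hφ : Measurable φ := hψ.comp hFcont.measurable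
    set G : Fin n → Ω → ℂ := fun i ω => φ (X i ω) with hGdef
    have hGmeas : ∀ i, Measurable (G i) := fun i => hφ.comp (hmeas i)
    have hGindep : ProbabilityTheory.iIndepFun G ℙ :=
      hindep.comp (fun _ => φ) (fun _ => hφ)
    have hpoint : ∀ ω, Complex.exp (Complex.I * t * A ω) = ∏ i, G i ω := by
      intro ω
      have harg : Complex.I * (t:ℂ) * ((A ω : ℝ) : ℂ)
          = ∑ i, c * ((Real.log (1 - F (X i ω) ^ a) : ℝ) : ℂ) := by
        rw [hA ω]
        push_cast
        rw [← Finset.mul_sum]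
        ring
      rw [harg, Complex.exp_sum]
    simp_rw [hpoint]
    rw [iIndep_integral_prod_complex G hGindep hGmeas Finset.univ]
    have hsingle : ∀ i, ∫ ω, G i ω ∂(ℙ : Measure Ω)
        = Complex.Gamma (1 + 1 / (a:ℂ)) * Complex.Gamma (1 + c) /
            Complex.Gamma (1 + c + 1 / (a:ℂ)) := by
      intro i
      have h1 : ∫ ω, G i ω ∂(ℙ : Measure Ω) = ∫ x, φ x ∂μ := by
        rw [← hid i, integral_map (hmeas i).aemeasurable hφ.aestronglyMeasurable]
      have h2 : ∫ x, φ x ∂μ = ∫ u, ψ u ∂(μ.map F) := by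
        rw [integral_map hFcont.measurable.aemeasurable hψ.aestronglyMeasurable]
      rw [h1, h2, map_cdf_uniform μ F hF hFcont]
      exact beta_calc ha hcre
    simp_rw [hsingle]
    rw [Finset.prod_const, Finset.card_univ, Fintype.card_fin]
    rw [show (1:ℂ) + c = 1 - Complex.I * (t:ℂ) * (a:ℂ) / (n:ℂ) by rw [hcdef]; ring]
end

section
/- The function f₂(y) = (y/2)·log(1 − e^{−y}) − (1/2)·Σ_{l=1}^∞ e^{−ly}/l² is monotone increasing on (0, ∞), with limit −π²/12 as y → 0⁺ and limit 0 as y → ∞. -/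
open Filter Topology

private lemma aux_log_hasSum (y : ℝ) (hy : 0 < y) :
    HasSum (fun l : ℕ+ => Real.exp (-(l : ℝ) * y) / (l : ℝ)) (-Real.log (1 - Real.exp (-y))) := by
  have hx : |Real.exp (-y)| < 1 := by
    rw [abs_of_pos (Real.exp_pos _)]
    exact Real.exp_lt_one_iff.mpr (by linarith)
  have h := Real.hasSum_pow_div_log_of_abs_lt_one hx
  apply (Equiv.pnatEquivNat.symm.hasSum_iff
    (f := fun l : ℕ+ => Real.exp (-(l : ℝ) * y) / (l : ℝ))
    (a := -Real.log (1 - Real.exp (-y)))).mp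
  convert h using 2 with n
  simp only [Function.comp, Equiv.pnatEquivNat, Equiv.coe_fn_symm_mk, Nat.succPNat_coe,
    Nat.cast_add, Nat.cast_one, ← Real.exp_nat_mul]
  push_cast
  ring_nf

private lemma aux_zeta : HasSum (fun l : ℕ+ => 1 / (l : ℝ) ^ 2) (Real.pi ^ 2 / 6) := by
  have h : Function.Injective (fun l : ℕ+ => (l : ℕ)) := fun a b hab => PNat.coe_injective hab
  have h0 : ∀ x ∉ Set.range (fun l : ℕ+ => (l : ℕ)), (1 : ℝ) / (x : ℝ) ^ 2 = 0 := by
    intro x hx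
    have : x = 0 := by
      by_contra h0
      exact hx ⟨⟨x, Nat.pos_of_ne_zero h0⟩, rfl⟩
    simp [this]
  exact (h.hasSum_iff (f := fun n : ℕ => 1 / (n : ℝ) ^ 2) h0).mpr hasSum_zeta_two

private lemma aux_tail_sum {r : ℝ} (h0 : 0 ≤ r) (h1 : r < 1) :
    HasSum (fun l : ℕ+ => r ^ (l : ℕ)) (r * (1 - r)⁻¹) := by
  apply (Equiv.pnatEquivNat.symm.hasSum_iff
    (f := fun l : ℕ+ => r ^ (l : ℕ)) (a := r * (1 - r)⁻¹)).mp
  have h := (hasSum_geometric_of_lt_one h0 h1).mul_left r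
  convert h using 2 with n
  · rfl
  simp [Function.comp, Equiv.pnatEquivNat, pow_succ, mul_comm]

private lemma aux_sum1 (y : ℝ) (hy : 0 < y) :
    Summable (fun l : ℕ+ => Real.exp (-(l : ℝ) * y) / (l : ℝ)) :=
  (aux_log_hasSum y hy).summable

private lemma aux_sum2 (y : ℝ) (hy : 0 < y) :
    Summable (fun l : ℕ+ => Real.exp (-(l : ℝ) * y) / (l : ℝ) ^ 2) := by
  refine Summable.of_nonneg_of_le (fun l => by positivity) (fun l => ?_) (aux_sum1 y hy)
  have hl : (1 : ℝ) ≤ (l : ℝ) := by exact_mod_cast l.one_le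
  apply div_le_div_of_nonneg_left (Real.exp_pos _).le (by linarith)
  nlinarith

private lemma aux_decomp (y : ℝ) :
    (fun l : ℕ+ => (1 + (l : ℝ) * y) * Real.exp (-(l : ℝ) * y) / (l : ℝ) ^ 2)
    = (fun l : ℕ+ => Real.exp (-(l : ℝ) * y) / (l : ℝ) ^ 2
        + y * (Real.exp (-(l : ℝ) * y) / (l : ℝ))) := by
  funext l
  have hl : (l : ℝ) ≠ 0 := by positivity
  field_simp

private lemma aux_sumg (y : ℝ) (hy : 0 < y) :
    Summable (fun l : ℕ+ => (1 + (l : ℝ) * y) * Real.exp (-(l : ℝ) * y) / (l : ℝ) ^ 2) := by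
  rw [aux_decomp y]
  exact (aux_sum2 y hy).add ((aux_sum1 y hy).mul_left y)

private lemma aux_rep (y : ℝ) (hy : 0 < y) :
    y / 2 * Real.log (1 - Real.exp (-y)) -
      (1 / 2) * ∑' l : ℕ+, Real.exp (-(l : ℝ) * y) / (l : ℝ) ^ 2
    = -(1/2) * ∑' l : ℕ+, (1 + (l : ℝ) * y) * Real.exp (-(l : ℝ) * y) / (l : ℝ) ^ 2 := by
  rw [aux_decomp y, Summable.tsum_add (aux_sum2 y hy) ((aux_sum1 y hy).mul_left y), tsum_mul_left,
    (aux_log_hasSum y hy).tsum_eq]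
  ring

private lemma aux_key {s t : ℝ} (hs : 0 ≤ s) (hst : s ≤ t) :
    (1 + t) * Real.exp (-t) ≤ (1 + s) * Real.exp (-s) := by
  have h2 : (t - s) + 1 ≤ Real.exp (t - s) := Real.add_one_le_exp _
  have h3 : (1 + s) * (1 + (t - s)) ≤ (1 + s) * Real.exp (t - s) := by
    apply mul_le_mul_of_nonneg_left (by linarith) (by linarith)
  have h4 : (1 + t) ≤ (1 + s) * (1 + (t - s)) := by nlinarith [mul_nonneg hs (sub_nonneg.2 hst)]
  calc (1 + t) * Real.exp (-t) ≤ ((1 + s) * Real.exp (t - s)) * Real.exp (-t) :=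
        mul_le_mul_of_nonneg_right (le_trans h4 h3) (Real.exp_pos _).le
    _ = (1 + s) * Real.exp (-s) := by rw [mul_assoc, ← Real.exp_add]; ring_nf

private lemma aux_bound2 {t : ℝ} (ht : 0 ≤ t) :
    (1 + t) * Real.exp (-t) ≤ 2 * Real.exp (-t / 2) := by
  have h1 : t / 2 + 1 ≤ Real.exp (t / 2) := Real.add_one_le_exp _
  have h4 : Real.exp (-t / 2) * Real.exp (t / 2) = 1 := by
    rw [← Real.exp_add, show -t / 2 + t / 2 = 0 by ring, Real.exp_zero]
  have h3 : (1 + t) * Real.exp (-t / 2) ≤ 2 := by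
    nlinarith [mul_nonneg (Real.exp_pos (-t / 2)).le
      (by linarith : (0:ℝ) ≤ 2 * Real.exp (t / 2) - (1 + t))]
  have hr : Real.exp (-t) = Real.exp (-t / 2) * Real.exp (-t / 2) := by
    rw [← Real.exp_add]; ring_nf
  calc (1 + t) * Real.exp (-t) = ((1 + t) * Real.exp (-t / 2)) * Real.exp (-t / 2) := by
        rw [hr]; ring
    _ ≤ 2 * Real.exp (-t / 2) :=
        mul_le_mul_of_nonneg_right h3 (Real.exp_pos _).le

private lemma aux_bound_l (y : ℝ) (hy : 0 < y) (l : ℕ+) :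
    (1 + (l : ℝ) * y) * Real.exp (-(l : ℝ) * y) / (l : ℝ) ^ 2
      ≤ 2 * (Real.exp (-(y / 2))) ^ (l : ℕ) := by
  have hl : (1 : ℝ) ≤ (l : ℝ) := by exact_mod_cast l.one_le
  have ht : 0 ≤ (l : ℝ) * y := by positivity
  have h1 : (1 + (l : ℝ) * y) * Real.exp (-(l : ℝ) * y) / (l : ℝ) ^ 2
      ≤ (1 + (l : ℝ) * y) * Real.exp (-(l : ℝ) * y) := by
    rw [div_le_iff₀ (by positivity)]
    have hA : (0:ℝ) ≤ (1 + (l : ℝ) * y) * Real.exp (-(l : ℝ) * y) := by positivity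
    have hl2 : (1:ℝ) ≤ (l : ℝ) ^ 2 := by nlinarith
    nlinarith [mul_le_mul_of_nonneg_left hl2 hA]
  have h2 := aux_bound2 ht
  have h3 : Real.exp (-((l : ℝ) * y) / 2) = (Real.exp (-(y / 2))) ^ (l : ℕ) := by
    rw [← Real.exp_nat_mul]
    congr 1
    push_cast
    ring
  calc (1 + (l : ℝ) * y) * Real.exp (-(l : ℝ) * y) / (l : ℝ) ^ 2
      ≤ (1 + (l : ℝ) * y) * Real.exp (-(l : ℝ) * y) := h1
    _ ≤ 2 * Real.exp (-((l : ℝ) * y) / 2) := by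
        have := aux_bound2 ht
        convert this using 3 <;> ring
    _ = 2 * (Real.exp (-(y / 2))) ^ (l : ℕ) := by rw [h3]

/-- `f₂(y) = (y/2)·log(1 − e^{−y}) − (1/2)·Σ_{l≥1} e^{−ly}/l²` is monotone increasing on
`(0,∞)`, tends to `−π²/12` as `y → 0⁺` and to `0` as `y → ∞`. -/
theorem f2_monotone_and_limits
    (f₂ : ℝ → ℝ)
    (hf : ∀ y : ℝ, f₂ y = y / 2 * Real.log (1 - Real.exp (-y)) -
      (1 / 2) * ∑' l : ℕ+, Real.exp (-(l : ℝ) * y) / (l : ℝ) ^ 2) :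
    MonotoneOn f₂ (Set.Ioi 0) ∧
    Tendsto f₂ (𝓝[>] 0) (𝓝 (-(Real.pi ^ 2 / 12))) ∧
    Tendsto f₂ atTop (𝓝 0) := by
  have hrep : ∀ y : ℝ, 0 < y → f₂ y =
      -(1/2) * ∑' l : ℕ+, (1 + (l : ℝ) * y) * Real.exp (-(l : ℝ) * y) / (l : ℝ) ^ 2 := by
    intro y hy
    rw [hf y, aux_rep y hy]
  refine ⟨?_, ?_, ?_⟩
  · -- Monotone
    intro a ha b hb hab
    simp only [Set.mem_Ioi] at ha hb
    rw [hrep a ha, hrep b hb]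
    have h : (∑' l : ℕ+, (1 + (l : ℝ) * b) * Real.exp (-(l : ℝ) * b) / (l : ℝ) ^ 2)
        ≤ ∑' l : ℕ+, (1 + (l : ℝ) * a) * Real.exp (-(l : ℝ) * a) / (l : ℝ) ^ 2 := by
      refine Summable.tsum_le_tsum (fun l => ?_) (aux_sumg b hb) (aux_sumg a ha)
      have hl0 : (0 : ℝ) < (l : ℝ) ^ 2 := by positivity
      rw [div_le_div_iff₀ hl0 hl0]
      have key := aux_key (s := (l : ℝ) * a) (t := (l : ℝ) * b)
        (by positivity) (by apply mul_le_mul_of_nonneg_left hab; positivity)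
      simp only [neg_mul]
      exact mul_le_mul_of_nonneg_right key hl0.le
    linarith
  · -- Limit at 0
    have htsum : Tendsto (fun y => ∑' l : ℕ+, Real.exp (-(l : ℝ) * y) / (l : ℝ) ^ 2)
        (𝓝[>] (0:ℝ)) (𝓝 (Real.pi ^ 2 / 6)) := by
      have h := tendsto_tsum_of_dominated_convergence (𝓕 := 𝓝[>] (0:ℝ))
        (f := fun y (l : ℕ+) => Real.exp (-(l : ℝ) * y) / (l : ℝ) ^ 2)
        (g := fun l : ℕ+ => 1 / (l : ℝ) ^ 2) (bound := fun l : ℕ+ => 1 / (l : ℝ) ^ 2)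
        aux_zeta.summable ?_ ?_
      · rwa [aux_zeta.tsum_eq] at h
      · intro l
        have hc : ContinuousAt (fun y : ℝ => Real.exp (-(l : ℝ) * y) / (l : ℝ) ^ 2) 0 := by
          fun_prop
        have h2 := hc.tendsto.mono_left (nhdsWithin_le_nhds (s := Set.Ioi (0:ℝ)))
        simpa using h2
      · filter_upwards [self_mem_nhdsWithin] with y hy l
        have hy' : (0:ℝ) < y := hy
        have h1 : Real.exp (-(l : ℝ) * y) ≤ 1 := by
          apply Real.exp_le_one_iff.mpr
          have : (0:ℝ) < (l : ℝ) := by positivity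
          nlinarith
        rw [Real.norm_eq_abs, abs_of_nonneg (by positivity)]
        apply div_le_div_of_nonneg_right h1 (by positivity)
    have hx : Tendsto (fun x : ℝ => x * Real.log x) (𝓝[>] (0:ℝ)) (𝓝 0) := by
      have := _root_.tendsto_log_mul_rpow_nhdsGT_zero zero_lt_one
      simp_rw [Real.rpow_one] at this
      simpa [mul_comm] using this
    have hsq : Tendsto (fun y : ℝ => y * Real.log y - y ^ 2) (𝓝[>] (0:ℝ)) (𝓝 0) := by
      have h2 : Tendsto (fun y : ℝ => y ^ 2) (𝓝[>] (0:ℝ)) (𝓝 0) := by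
        have : Tendsto (fun y : ℝ => y ^ 2) (𝓝 (0:ℝ)) (𝓝 0) := by
          simpa using (continuous_pow 2).tendsto (0:ℝ)
        exact this.mono_left nhdsWithin_le_nhds
      simpa using hx.sub h2
    have hlog : Tendsto (fun y => y * Real.log (1 - Real.exp (-y))) (𝓝[>] (0:ℝ)) (𝓝 0) := by
      apply tendsto_of_tendsto_of_tendsto_of_le_of_le' hsq hx
      · filter_upwards [Ioo_mem_nhdsGT_of_mem (by norm_num : (0:ℝ) ∈ Set.Ico (0:ℝ) 1)]
          with y hy
        obtain ⟨hy0, hy1⟩ := hy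
        have h4 : Real.exp y * Real.exp (-y) = 1 := by rw [← Real.exp_add]; simp
        have hylow : y * Real.exp (-y) ≤ 1 - Real.exp (-y) := by
          nlinarith [mul_le_mul_of_nonneg_right (Real.add_one_le_exp y) (Real.exp_pos (-y)).le]
        have hpos : (0:ℝ) < y * Real.exp (-y) := by positivity
        have hle : Real.log y - y ≤ Real.log (1 - Real.exp (-y)) := by
          have := Real.log_le_log hpos hylow
          rwa [Real.log_mul (by positivity) (by positivity), Real.log_exp] at this
        nlinarith [mul_le_mul_of_nonneg_left hle hy0.le]
      · filter_upwards [Ioo_mem_nhdsGT_of_mem (by norm_num : (0:ℝ) ∈ Set.Ico (0:ℝ) 1)]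
          with y hy
        obtain ⟨hy0, hy1⟩ := hy
        have hpos : (0:ℝ) < 1 - Real.exp (-y) := by
          have := Real.exp_lt_one_iff.mpr (by linarith : -y < 0)
          linarith
        have hup : 1 - Real.exp (-y) ≤ y := by nlinarith [Real.add_one_le_exp (-y)]
        have hle : Real.log (1 - Real.exp (-y)) ≤ Real.log y := Real.log_le_log hpos hup
        nlinarith [mul_le_mul_of_nonneg_left hle hy0.le]
    have hcomb := (hlog.const_mul (1/2 : ℝ)).sub (htsum.const_mul (1/2 : ℝ))
    have : Tendsto f₂ (𝓝[>] (0:ℝ))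
        (𝓝 ((1/2 : ℝ) * 0 - (1/2 : ℝ) * (Real.pi ^ 2 / 6))) := by
      apply hcomb.congr
      intro y
      rw [hf y]
      ring
    convert this using 2
    ring
  · -- Limit at infinity
    have hr : Tendsto (fun y : ℝ => Real.exp (-(y / 2))) atTop (𝓝 0) := by
      simpa using tendsto_id.atTop_div_const (two_pos (α := ℝ))
    have hB : Tendsto (fun y : ℝ => 2 * (Real.exp (-(y / 2)) * (1 - Real.exp (-(y / 2)))⁻¹))
        atTop (𝓝 0) := by
      have hc : ContinuousAt (fun r : ℝ => 2 * (r * (1 - r)⁻¹)) 0 := by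
        apply ContinuousAt.mul continuousAt_const
        apply ContinuousAt.mul continuousAt_id
        apply ContinuousAt.inv₀ (by fun_prop) (by norm_num)
      have := hc.tendsto.comp hr
      simpa [Function.comp_def] using this
    have hBneg : Tendsto
        (fun y : ℝ => -(1/2 : ℝ) * (2 * (Real.exp (-(y / 2)) * (1 - Real.exp (-(y / 2)))⁻¹)))
        atTop (𝓝 0) := by
      have := hB.const_mul (-(1/2) : ℝ)
      simpa using this
    apply tendsto_of_tendsto_of_tendsto_of_le_of_le' hBneg tendsto_const_nhds
    · filter_upwards [eventually_gt_atTop (0:ℝ)] with y hy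
      rw [hrep y hy]
      have hr0 : (0:ℝ) ≤ Real.exp (-(y / 2)) := (Real.exp_pos _).le
      have hr1 : Real.exp (-(y / 2)) < 1 := Real.exp_lt_one_iff.mpr (by linarith)
      have hS : (∑' l : ℕ+, (1 + (l : ℝ) * y) * Real.exp (-(l : ℝ) * y) / (l : ℝ) ^ 2)
          ≤ ∑' l : ℕ+, 2 * (Real.exp (-(y / 2))) ^ (l : ℕ) := by
        refine Summable.tsum_le_tsum (fun l => aux_bound_l y hy l) (aux_sumg y hy)
          (((aux_tail_sum hr0 hr1).summable).mul_left 2)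
      have hts : (∑' l : ℕ+, 2 * (Real.exp (-(y / 2))) ^ (l : ℕ))
          = 2 * (Real.exp (-(y / 2)) * (1 - Real.exp (-(y / 2)))⁻¹) := by
        rw [tsum_mul_left, (aux_tail_sum hr0 hr1).tsum_eq]
      nlinarith [hS, hts]
    · filter_upwards [eventually_gt_atTop (0:ℝ)] with y hy
      rw [hrep y hy]
      have hS0 : (0:ℝ) ≤ ∑' l : ℕ+, (1 + (l : ℝ) * y) * Real.exp (-(l : ℝ) * y) / (l : ℝ) ^ 2 :=
        tsum_nonneg fun l => by positivity
      linarith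
end
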